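/- Let A be a commutative ring, π ∈ A, q ≥ 1 an integer, Ψ : A → A a ring homomorphism with Ψ(π) = π, and ∂ : A → A any map such that Ψ(a) = a^q + π·∂(a) for all a ∈ A. Let n ≥ 2 and let x_0, x_1, …, x_n ∈ A satisfy Ψ^m(x_0) = Σ_{i=0}^{m} π^i · x_i^{q^{m−i}} for both m = n−1 and m = n (Ψ^m denoting the m-fold iterate). Then π^n·x_n = π^n·∂(x_{n−1}) + Σ_{i=0}^{n−2} Σ_{j=1}^{q^{n−1−i}} π^{i+j} · C(q^{n−1−i}, j) · x_i^{q·(q^{n−1−i}−j)} · (∂(x_i))^j, where C(m, j) denotes the binomial coefficient. -/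

import Mathlib

lemma binom_aux {A : Type*} [CommRing A] (π a b : A) (q m : ℕ) (hm : 1 ≤ m) :
    (a ^ q + π * b) ^ m =
      a ^ (q * m) + ∑ j ∈ Finset.Icc 1 m,
        π ^ j * (m.choose j : A) * a ^ (q * (m - j)) * b ^ j := by
  rw [add_comm (a ^ q), add_pow]
  rw [Finset.range_eq_Ico, Finset.sum_eq_sum_Ico_succ_bot (by omega : 0 < m + 1)]
  rw [← Finset.Ico_add_one_right_eq_Icc] at *
  congr 1
  · simp [pow_mul]
  · apply Finset.sum_congr rfl
    intro j hj
    rw [mul_pow, ← pow_mul]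
    ring

/-- Lemma A.1 (l.coord1): the recursion for coordinates of a prolongation sequence
satisfying the ghost condition `Ψ^m(x₀) = ∑ π^i x_i^{q^{m-i}}`. -/
theorem stmt_0 {A : Type*} [CommRing A] (π : A) (q : ℕ) (hq : 1 ≤ q)
    (Ψ : A →+* A) (hΨπ : Ψ π = π) (d : A → A)
    (hΨ : ∀ a : A, Ψ a = a ^ q + π * d a)
    (n : ℕ) (hn : 2 ≤ n) (x : ℕ → A)
    (hg1 : (⇑Ψ)^[n - 1] (x 0) = ∑ i ∈ Finset.range n, π ^ i * x i ^ q ^ (n - 1 - i))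
    (hg2 : (⇑Ψ)^[n] (x 0) = ∑ i ∈ Finset.range (n + 1), π ^ i * x i ^ q ^ (n - i)) :
    π ^ n * x n = π ^ n * d (x (n - 1)) +
      ∑ i ∈ Finset.range (n - 1), ∑ j ∈ Finset.Icc 1 (q ^ (n - 1 - i)),
        π ^ (i + j) * ((q ^ (n - 1 - i)).choose j : A) *
          x i ^ (q * (q ^ (n - 1 - i) - j)) * d (x i) ^ j := by
  have key : (⇑Ψ)^[n] (x 0) =
      ∑ i ∈ Finset.range n, π ^ i * (x i ^ q + π * d (x i)) ^ (q ^ (n - 1 - i)) := by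
    conv_lhs => rw [show n = (n - 1) + 1 by omega]
    rw [Function.iterate_succ_apply', hg1, map_sum]
    refine Finset.sum_congr rfl fun i _ => ?_
    rw [map_mul, map_pow, map_pow, hΨπ, hΨ]
  have expand : ∑ i ∈ Finset.range n, π ^ i * (x i ^ q + π * d (x i)) ^ (q ^ (n - 1 - i)) =
      (∑ i ∈ Finset.range n, π ^ i * x i ^ q ^ (n - i)) +
      ∑ i ∈ Finset.range n, ∑ j ∈ Finset.Icc 1 (q ^ (n - 1 - i)),
        π ^ (i + j) * ((q ^ (n - 1 - i)).choose j : A) *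
          x i ^ (q * (q ^ (n - 1 - i) - j)) * d (x i) ^ j := by
    rw [← Finset.sum_add_distrib]
    refine Finset.sum_congr rfl fun i hi => ?_
    have hi' : i < n := Finset.mem_range.mp hi
    rw [binom_aux _ _ _ q _ (Nat.one_le_pow _ _ (by omega)), mul_add]
    congr 1
    · congr 2
      rw [← pow_succ']
      congr 1
      omega
    · rw [Finset.mul_sum]
      refine Finset.sum_congr rfl fun j hj => ?_
      rw [pow_add]
      ring
  have split2 : ∑ i ∈ Finset.range n, ∑ j ∈ Finset.Icc 1 (q ^ (n - 1 - i)),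
        π ^ (i + j) * ((q ^ (n - 1 - i)).choose j : A) *
          x i ^ (q * (q ^ (n - 1 - i) - j)) * d (x i) ^ j =
      (∑ i ∈ Finset.range (n - 1), ∑ j ∈ Finset.Icc 1 (q ^ (n - 1 - i)),
        π ^ (i + j) * ((q ^ (n - 1 - i)).choose j : A) *
          x i ^ (q * (q ^ (n - 1 - i) - j)) * d (x i) ^ j) + π ^ n * d (x (n - 1)) := by
    conv_lhs => rw [show n = (n - 1) + 1 by omega, Finset.sum_range_succ]
    simp only [Nat.add_sub_cancel]
    congr 1
    rw [Nat.sub_self, pow_zero]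
    simp [show n - 1 + 1 = n by omega]
  have hg2' : (⇑Ψ)^[n] (x 0) =
      (∑ i ∈ Finset.range n, π ^ i * x i ^ q ^ (n - i)) + π ^ n * x n := by
    rw [hg2, Finset.sum_range_succ, Nat.sub_self]
    simp
  have := hg2'.symm.trans (key.trans (expand.trans (by rw [split2])))
  have h := add_left_cancel this
  rw [h]
  ring
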